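/- arXiv:2106.00735 — 3 statements merged into one kernel-verified Lean document; each statement's English description precedes it below -/
import Mathlib

section
/- Let n = 2 and m ≥ 3. Every 3×3 minor of the m×4 matrix T whose k-th row is (x_{11}^{(k)}, x_{12}^{(k)}, x_{21}^{(k)}, x_{22}^{(k)}) vanishes at every point of Sing_{2,m}, i.e. belongs to the vanishing ideal I_{2,m}. -/
open MvPolynomial Matrix

noncomputable section

/-- `Sing_{n,m}`: tuples of `n × n` complex matrices (encoded as points of
`ℂ^(m × n × n)`) all of whose linear combinations are singular. -/
def SingSet (n m : ℕ) : Set ((Fin m × Fin n × Fin n) → ℂ) :=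
  { x | ∀ lam : Fin m → ℂ,
      (Matrix.of fun i j : Fin n => ∑ k : Fin m, lam k * x (k, i, j)).det = 0 }

/-- The vanishing ideal `I_{n,m}` of `Sing_{n,m}`. -/
def singIdeal (n m : ℕ) : Ideal (MvPolynomial (Fin m × Fin n × Fin n) ℂ) :=
  MvPolynomial.vanishingIdeal ℂ (SingSet n m)

/-- The polynomial `det (λ₁ X⁽¹⁾ + ⋯ + λ_m X⁽ᵐ⁾)`. -/
def detPoly (n m : ℕ) (lam : Fin m → ℂ) : MvPolynomial (Fin m × Fin n × Fin n) ℂ :=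
  (Matrix.of fun i j : Fin n =>
    ∑ k : Fin m, MvPolynomial.C (lam k) * MvPolynomial.X (k, i, j)).det

/-- The column indexing of the `m × 4` matrix `T` whose `k`-th row is
`(x₁₁⁽ᵏ⁾, x₁₂⁽ᵏ⁾, x₂₁⁽ᵏ⁾, x₂₂⁽ᵏ⁾)`. -/
def pairIdx : Fin 4 → Fin 2 × Fin 2 := ![(0, 0), (0, 1), (1, 0), (1, 1)]

theorem stmt4 (m : ℕ) (hm : 3 ≤ m) (r : Fin 3 → Fin m) (c : Fin 3 → Fin 4)
    (hr : Function.Injective r) (hc : Function.Injective c) :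
    (Matrix.of fun a b : Fin 3 => MvPolynomial.X (r a, pairIdx (c b))).det
      ∈ singIdeal 2 m := by
  classical
  rw [singIdeal, MvPolynomial.mem_vanishingIdeal_iff]
  intro x hx
  -- Unpack the singularity hypothesis as a scalar identity.
  have hdet : ∀ lam : Fin m → ℂ,
      (∑ k, lam k * x (k, 0, 0)) * (∑ k, lam k * x (k, 1, 1)) -
      (∑ k, lam k * x (k, 0, 1)) * (∑ k, lam k * x (k, 1, 0)) = 0 := by
    intro lam
    have h := hx lam
    rwa [Matrix.det_fin_two] at h
  have sum_single : ∀ (p : Fin m) (i j : Fin 2),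
      ∑ k, (Pi.single p (1:ℂ) : Fin m → ℂ) k * x (k, i, j) = x (p, i, j) := by
    intro p i j; simp [Pi.single_apply, ite_mul, Finset.sum_ite_eq']
  -- Each matrix in the tuple is singular.
  have q0 : ∀ p : Fin m,
      x (p,0,0) * x (p,1,1) - x (p,0,1) * x (p,1,0) = 0 := by
    intro p
    have h := hdet (Pi.single p 1)
    simpa [sum_single] using h
  -- The rows of T are pairwise orthogonal for the polar form of `det`.
  have gramx : ∀ a b : Fin 3,
      x (r a,0,0) * x (r b,1,1) + x (r a,1,1) * x (r b,0,0)
        - x (r a,0,1) * x (r b,1,0) - x (r a,1,0) * x (r b,0,1) = 0 := by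
    intro a b
    by_cases hab : a = b
    · subst hab
      linear_combination 2 * q0 (r a)
    · have hsum : ∀ i j : Fin 2,
          ∑ k, ((Pi.single (r a) (1:ℂ) + Pi.single (r b) 1) : Fin m → ℂ) k * x (k,i,j)
            = x (r a,i,j) + x (r b,i,j) := by
        intro i j
        simp [Pi.add_apply, add_mul, Finset.sum_add_distrib,
          Pi.single_apply, ite_mul, Finset.sum_ite_eq']
      have h2 := hdet (Pi.single (r a) 1 + Pi.single (r b) 1)
      simp only [hsum] at h2
      linear_combination h2 - q0 (r a) - q0 (r b)
  set V : Matrix (Fin 3) (Fin 4) ℂ := Matrix.of (fun a j => x (r a, pairIdx j)) with hV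
  have gram : ∀ a b : Fin 3,
      V a 0 * V b 3 + V a 3 * V b 0 - V a 1 * V b 2 - V a 2 * V b 1 = 0 := by
    intro a b
    exact gramx a b
  set Q : Matrix (Fin 4) (Fin 4) ℂ :=
    !![0,0,0,1; 0,0,-1,0; 0,-1,0,0; 1,0,0,0] with hQ
  have hQQ : Q * Q = 1 := by
    ext i j
    fin_cases i <;> fin_cases j <;>
      norm_num [hQ, Matrix.mul_apply, Fin.sum_univ_four, Matrix.one_apply,
        Matrix.vecHead, Matrix.vecTail, Fin.ext_iff, Matrix.cons_val_two, Matrix.cons_val_three]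
  have hQdet : IsUnit Q.det :=
    IsUnit.of_mul_eq_one _ (by rw [← Matrix.det_mul, hQQ, Matrix.det_one])
  -- The Gram identities say `V * Q * Vᵀ = 0`.
  have hmul : V * (Q * Vᵀ) = 0 := by
    ext a b
    have hG := gram a b
    simp only [Matrix.mul_apply, Fin.sum_univ_four, Matrix.transpose_apply,
      Matrix.zero_apply, hQ]
    norm_num [Matrix.vecHead, Matrix.vecTail, Matrix.cons_val_two, Matrix.cons_val_three]
    linear_combination hG
  -- Hence `rank V ≤ 2`, so the three rows are linearly dependent.
  have hrank := Matrix.rank_add_rank_le_card_of_mul_eq_zero hmul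
  rw [Matrix.rank_mul_eq_right_of_isUnit_det Q Vᵀ hQdet, Matrix.rank_transpose,
    Fintype.card_fin] at hrank
  have hdep : ¬ LinearIndependent ℂ V.row := by
    intro h
    have h3 := h.rank_matrix
    rw [Fintype.card_fin] at h3
    omega
  rw [Fintype.not_linearIndependent_iff] at hdep
  obtain ⟨g, hg, a0, ha0⟩ := hdep
  -- Conclude that the evaluated minor has determinant zero.
  change eval x _ = 0
  rw [RingHom.map_det]
  have hmap : ((Matrix.of fun a b : Fin 3 =>
      MvPolynomial.X (R := ℂ) (r a, pairIdx (c b))).map (eval x))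
      = Matrix.of fun a b : Fin 3 => x (r a, pairIdx (c b)) := by
    ext a b; simp [Matrix.map_apply]
  rw [RingHom.mapMatrix_apply, hmap, ← Matrix.exists_vecMul_eq_zero_iff]
  refine ⟨g, fun h0 => ha0 (congrFun h0 a0), ?_⟩
  funext j
  have hj := congrFun hg (c j)
  simp only [Finset.sum_apply, Pi.smul_apply, Pi.zero_apply, smul_eq_mul] at hj
  simpa [Matrix.vecMul, dotProduct, hV] using hj

end
end

section
/- Let m ≥ 1 and let (A_1,…,A_m) ∈ Sing_{2,m}, i.e. A_1,…,A_m are 2×2 complex matrices all of whose complex linear combinations are singular. Then the linear span of A_1,…,A_m in the space of 2×2 complex matrices has dimension at most 2. -/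
open Matrix

noncomputable section

/-- The polarization bilinear form of the determinant on 2×2 matrices. -/
def detBilin : LinearMap.BilinForm ℂ (Matrix (Fin 2) (Fin 2) ℂ) :=
  LinearMap.mk₂ ℂ
    (fun X Y => X 0 0 * Y 1 1 + X 1 1 * Y 0 0 - X 0 1 * Y 1 0 - X 1 0 * Y 0 1)
    (by intros; simp [Matrix.add_apply]; ring)
    (by intros; simp [Matrix.smul_apply, smul_eq_mul]; ring)
    (by intros; simp [Matrix.add_apply]; ring)
    (by intros; simp [Matrix.smul_apply, smul_eq_mul]; ring)

lemma detBilin_apply (X Y : Matrix (Fin 2) (Fin 2) ℂ) :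
    detBilin X Y = X 0 0 * Y 1 1 + X 1 1 * Y 0 0 - X 0 1 * Y 1 0 - X 1 0 * Y 0 1 := rfl

lemma det_add_eq (X Y : Matrix (Fin 2) (Fin 2) ℂ) :
    (X + Y).det = X.det + Y.det + detBilin X Y := by
  simp [Matrix.det_fin_two, detBilin_apply, Matrix.add_apply]; ring

lemma detBilin_symm : detBilin.IsSymm := by
  rw [LinearMap.BilinForm.isSymm_def]
  intro X Y; simp [detBilin_apply]; ring

lemma detBilin_nondeg : detBilin.Nondegenerate := by
  refine (LinearMap.IsRefl.nondegenerate_iff_separatingLeft detBilin_symm.isRefl).2 ?_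
  intro X hX
  ext i j
  have h00 := hX (Matrix.single 1 1 1)
  have h11 := hX (Matrix.single 0 0 1)
  have h01 := hX (Matrix.single 1 0 1)
  have h10 := hX (Matrix.single 0 1 1)
  simp [detBilin_apply, Matrix.single] at h00 h11 h01 h10
  fin_cases i <;> fin_cases j <;> simp_all

theorem stmt5 (m : ℕ) (hm : 1 ≤ m) (A : Fin m → Matrix (Fin 2) (Fin 2) ℂ)
    (hA : ∀ lam : Fin m → ℂ, (∑ k : Fin m, lam k • A k).det = 0) :
    Module.finrank ℂ (Submodule.span ℂ (Set.range A)) ≤ 2 := by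
  set V := Submodule.span ℂ (Set.range A) with hVdef
  have hdet : ∀ X ∈ V, X.det = 0 := by
    intro X hX
    rw [hVdef, Submodule.mem_span_range_iff_exists_fun] at hX
    obtain ⟨c, hc⟩ := hX
    rw [← hc]
    exact hA c
  have hle : V ≤ detBilin.orthogonal V := by
    intro X hX Y hY
    have h := det_add_eq Y X
    rw [hdet _ (V.add_mem hY hX), hdet _ hY, hdet _ hX] at h
    simpa [LinearMap.BilinForm.IsOrtho] using h.symm
  have hrefl : detBilin.IsRefl := detBilin_symm.isRefl
  have h4 : Module.finrank ℂ (Matrix (Fin 2) (Fin 2) ℂ) = 4 := by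
    simp [Module.finrank_matrix]
  have horth := LinearMap.BilinForm.finrank_orthogonal detBilin_nondeg V
  have hVle := Submodule.finrank_le V
  have := Submodule.finrank_mono hle
  omega

end
end

section
/- Let m ≥ 1 and let (A_1,…,A_m) ∈ Sing_{2,m}, i.e. A_1,…,A_m are 2×2 complex matrices all of whose complex linear combinations are singular. Then either there exists a nonzero vector v ∈ ℂ² such that every column of every A_i is a scalar multiple of v (equivalently, the column space of every A_i is contained in ℂv), or there exists a nonzero vector w ∈ ℂ² such that every row of every A_i is a scalar multiple of w (equivalently, the row space of every A_i is contained in ℂw). -/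
open Matrix

noncomputable section

private def cr (a b : Fin 2 → ℂ) : ℂ := a 0 * b 1 - a 1 * b 0

private lemma cr_zero_left (b : Fin 2 → ℂ) : cr 0 b = 0 := by
  simp [cr]

private lemma ne_zero_iff (a : Fin 2 → ℂ) : a ≠ 0 ↔ a 0 ≠ 0 ∨ a 1 ≠ 0 := by
  constructor
  · intro ha
    by_contra h'
    push_neg at h'
    apply ha
    funext r
    fin_cases r <;> simp [h'.1, h'.2]
  · rintro (h | h) h0 <;> simp [h0] at h

private lemma cr_par {a b : Fin 2 → ℂ} (ha : a ≠ 0) (h : cr a b = 0) :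
    ∃ c : ℂ, b = c • a := by
  unfold cr at h
  rcases (ne_zero_iff a).1 ha with h0 | h1
  · refine ⟨b 0 / a 0, funext fun r => ?_⟩
    fin_cases r
    · simp; field_simp
    · simp; field_simp; linear_combination h
  · refine ⟨b 1 / a 1, funext fun r => ?_⟩
    fin_cases r
    · simp; field_simp; linear_combination -h
    · simp; field_simp

private lemma cr_smul (c : ℂ) (a b : Fin 2 → ℂ) : cr (c • a) b = c * cr a b := by
  simp [cr]; ring

private lemma decomp (A : Matrix (Fin 2) (Fin 2) ℂ) (h : A.det = 0) :
    ∃ u w : Fin 2 → ℂ, (∀ r j, A r j = u r * w j) ∧ (A = 0 → u = 0) := by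
  rw [Matrix.det_fin_two] at h
  by_cases h0 : (fun r => A r 0) = (0 : Fin 2 → ℂ)
  · refine ⟨fun r => A r 1, ![0, 1], fun r j => ?_, fun hA => ?_⟩
    · have h0r := congrFun h0 r
      simp at h0r
      fin_cases j <;> simp [h0r]
    · funext r; simp [hA]
  · have h0' : A 0 0 ≠ 0 ∨ A 1 0 ≠ 0 := by
      by_contra h'
      push_neg at h'
      exact h0 (funext fun r => by fin_cases r <;> simp [h'.1, h'.2])
    rcases h0' with hx | hx
    · refine ⟨fun r => A r 0, ![1, A 0 1 / A 0 0], fun r j => ?_, fun hA => ?_⟩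
      · fin_cases r <;> fin_cases j <;> simp
        · field_simp
        · field_simp; linear_combination h
      · funext r; simp [hA]
    · refine ⟨fun r => A r 0, ![1, A 1 1 / A 1 0], fun r j => ?_, fun hA => ?_⟩
      · fin_cases r <;> fin_cases j <;> simp
        · field_simp; linear_combination -h
        · field_simp
      · funext r; simp [hA]

theorem stmt7 (m : ℕ) (hm : 1 ≤ m) (A : Fin m → Matrix (Fin 2) (Fin 2) ℂ)
    (hA : ∀ lam : Fin m → ℂ, (∑ k : Fin m, lam k • A k).det = 0) :
    (∃ v : Fin 2 → ℂ, v ≠ 0 ∧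
        ∀ i : Fin m, ∀ j : Fin 2, ∃ c : ℂ, (fun r => A i r j) = c • v) ∨
      (∃ w : Fin 2 → ℂ, w ≠ 0 ∧
        ∀ i : Fin m, ∀ r : Fin 2, ∃ c : ℂ, (fun j => A i r j) = c • w) := by
  have hdet : ∀ i, (A i).det = 0 := by
    intro i
    have h := hA (Pi.single i (1 : ℂ) : Fin m → ℂ)
    have hs : ∑ k : Fin m, (Pi.single i (1 : ℂ) : Fin m → ℂ) k • A k = A i := by
      simp [Pi.single_apply, ite_smul]
    rwa [hs] at h
  choose u w huw hz using fun i => decomp (A i) (hdet i)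
  -- columns/rows nonzero when matrix nonzero
  have hwne : ∀ i, A i ≠ 0 → w i ≠ 0 := by
    intro i hAi hwi
    exact hAi (Matrix.ext fun r j => by simp [huw, hwi])
  have key : ∀ i j, cr (u i) (u j) * cr (w i) (w j) = 0 := by
    intro i j
    rcases eq_or_ne i j with rfl | hij
    · unfold cr; ring
    · have h := hA ((Pi.single i (1 : ℂ) + Pi.single j (1 : ℂ) : Fin m → ℂ))
      have hs : ∑ k : Fin m, ((Pi.single i (1 : ℂ) + Pi.single j (1 : ℂ) : Fin m → ℂ)) k • A k
          = A i + A j := by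
        simp [Pi.add_apply, add_smul, Finset.sum_add_distrib, Pi.single_apply,
          ite_smul]
      rw [hs, Matrix.det_fin_two] at h
      simp only [Matrix.add_apply, huw] at h
      unfold cr
      linear_combination h
  by_cases hcol : ∀ i j, cr (u i) (u j) = 0
  · left
    by_cases hall : ∀ i, A i = 0
    · refine ⟨![1, 0], by simp [ne_zero_iff], fun i j => ⟨0, ?_⟩⟩
      funext r
      simp [hall i]
    · push_neg at hall
      obtain ⟨i0, hi0⟩ := hall
      have hu0 : u i0 ≠ 0 := by
        intro h
        exact hi0 (Matrix.ext fun r j => by simp [huw, h])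
      refine ⟨u i0, hu0, fun i j => ?_⟩
      obtain ⟨c, hc⟩ := cr_par hu0 (hcol i0 i)
      refine ⟨c * w i j, funext fun r => ?_⟩
      have := congrFun hc r
      simp only [Pi.smul_apply, smul_eq_mul] at this ⊢
      rw [huw i r j, this]; ring
  · right
    push_neg at hcol
    obtain ⟨i, j, hij⟩ := hcol
    have hui : u i ≠ 0 := fun h => hij (by rw [h]; exact cr_zero_left _)
    have huj : u j ≠ 0 := fun h => by
      apply hij; unfold cr; rw [h]; simp
    have hAi : A i ≠ 0 := fun h => hui (hz i h)
    have hAj : A j ≠ 0 := fun h => huj (hz j h)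
    have hwi : w i ≠ 0 := hwne i hAi
    have hwj : w j ≠ 0 := hwne j hAj
    have hwij : cr (w i) (w j) = 0 := by
      have := key i j
      exact (mul_eq_zero.1 this).resolve_left hij
    obtain ⟨d, hd⟩ := cr_par hwi hwij
    have hdne : d ≠ 0 := by
      intro h
      rw [h, zero_smul] at hd
      exact hwj hd
    refine ⟨w i, hwi, fun k r => ?_⟩
    by_cases hAk : A k = 0
    · exact ⟨0, funext fun jj => by simp [hAk]⟩
    · have huk : u k ≠ 0 := by
        intro h
        exact hAk (Matrix.ext fun r' j' => by simp [huw, h])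
      have hwk : cr (w i) (w k) = 0 := by
        by_contra hwk
        have h1 : cr (u i) (u k) = 0 :=
          (mul_eq_zero.1 (key i k)).resolve_right hwk
        have hwjk : cr (w j) (w k) ≠ 0 := by
          rw [hd, cr_smul]
          exact mul_ne_zero hdne hwk
        have h2 : cr (u j) (u k) = 0 :=
          (mul_eq_zero.1 (key j k)).resolve_right hwjk
        have h1' : cr (u k) (u i) = 0 := by
          unfold cr at h1 ⊢; linear_combination -h1
        have h2' : cr (u k) (u j) = 0 := by
          unfold cr at h2 ⊢; linear_combination -h2
        obtain ⟨a, ha⟩ := cr_par huk h1'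
        obtain ⟨b, hb⟩ := cr_par huk h2'
        apply hij
        rw [ha, hb]
        unfold cr
        simp only [Pi.smul_apply, smul_eq_mul]
        ring
      obtain ⟨c, hc⟩ := cr_par hwi hwk
      refine ⟨u k r * c, funext fun jj => ?_⟩
      have := congrFun hc jj
      simp only [Pi.smul_apply, smul_eq_mul] at this ⊢
      rw [huw k r jj, this]; ring

end
end
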